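/- Let a : ℕ → ℝ with ∑ₙ aₙ² = ∞, let P₋ := ⨂_{n∈ℕ} gaussianReal(0, 1) be the infinite product measure on Ω = (ℕ → ℝ), and for ω ∈ Ω define the log-likelihood-ratio partial sums Sₙ(ω) := ∑_{i<n} (aᵢ·ωᵢ − aᵢ²/2). Then Sₙ → −∞ P₋-almost surely. (Under the status quo hypothesis, the log-likelihood ratio of 'change' versus 'status quo' diverges to −∞: inferential resolution lim l_t = −∞ occurs almost surely.) -/

import Mathlib

open MeasureTheory ProbabilityTheory Filter

open Real
open scoped ENNReal NNReal


lemma gauss_pdf_mul (t x : ℝ) :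
    gaussianPDFReal 0 1 x * rexp (t * x) = rexp (t^2/2) * gaussianPDFReal t 1 x := by
  simp only [gaussianPDFReal, NNReal.coe_one, mul_one, sub_zero]
  rw [mul_assoc, ← Real.exp_add, mul_comm (rexp (t^2/2)), mul_assoc, ← Real.exp_add]
  congr 1
  ring

lemma gaussianReal_std_eq : gaussianReal 0 1 =
    volume.withDensity (fun x => ((gaussianPDFReal 0 1 x).toNNReal : ℝ≥0∞)) := by
  rw [gaussianReal_of_var_ne_zero 0 one_ne_zero]
  rfl

lemma smul_exp_eq (t : ℝ) : (fun x => ((gaussianPDFReal 0 1 x).toNNReal : ℝ≥0) • rexp (t * x))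
      = fun x => rexp (t^2/2) * gaussianPDFReal t 1 x := by
  funext x
  rw [NNReal.smul_def, Real.coe_toNNReal _ (gaussianPDFReal_nonneg 0 1 x), smul_eq_mul,
    gauss_pdf_mul]

lemma integrable_exp_mul_gaussian (t : ℝ) :
    Integrable (fun x => rexp (t * x)) (gaussianReal 0 1) := by
  rw [gaussianReal_std_eq]
  refine (integrable_withDensity_iff_integrable_smul
      ((measurable_gaussianPDFReal 0 1).real_toNNReal)).mpr ?_
  rw [smul_exp_eq]
  exact (integrable_gaussianPDFReal t 1).const_mul _

lemma integral_exp_mul_gaussian (t : ℝ) :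
    ∫ x, rexp (t * x) ∂(gaussianReal 0 1) = rexp (t^2/2) := by
  rw [gaussianReal_std_eq,
    integral_withDensity_eq_integral_smul ((measurable_gaussianPDFReal 0 1).real_toNNReal)]
  rw [smul_exp_eq, integral_const_mul, integral_gaussianPDFReal_eq_one t one_ne_zero, mul_one]

lemma coord_law (Pm : Measure (ℕ → ℝ))
    (hPm : ∀ n : ℕ, Measure.map (fun ω (i : Fin n) => ω i) Pm =
      Measure.pi fun _ : Fin n => gaussianReal 0 1)
    (i : ℕ) : Pm.map (fun ω => ω i) = gaussianReal 0 1 := by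
  have h1 : (fun ω : ℕ → ℝ => ω i)
      = (fun x : Fin (i+1) → ℝ => x ⟨i, Nat.lt_succ_self i⟩)
        ∘ (fun ω (j : Fin (i+1)) => ω j) := rfl
  have hmm := Measure.map_map (μ := Pm)
    (g := fun x : Fin (i+1) → ℝ => x ⟨i, Nat.lt_succ_self i⟩)
    (f := fun ω (j : Fin (i+1)) => ω (j : ℕ))
    (measurable_pi_apply _) (measurable_pi_lambda _ fun j => measurable_pi_apply _)
  rw [h1, ← hmm, hPm]
  ext s hs
  rw [Measure.map_apply (measurable_pi_apply (⟨i, Nat.lt_succ_self i⟩ : Fin (i+1))) hs]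
  have hpre : (fun x : Fin (i+1) → ℝ => x ⟨i, Nat.lt_succ_self i⟩) ⁻¹' s
      = Set.pi Set.univ (Function.update (fun _ : Fin (i+1) => (Set.univ : Set ℝ))
          ⟨i, Nat.lt_succ_self i⟩ s) := by
    ext x
    simp only [Set.mem_preimage, Set.mem_univ_pi, Function.update_apply]
    constructor
    · intro h j
      split
      · next h' => subst h'; exact h
      · trivial
    · intro h
      have := h ⟨i, Nat.lt_succ_self i⟩
      simpa using this
  rw [hpre, Measure.pi_pi]
  have hupd : ∀ j : Fin (i+1),
      (gaussianReal 0 1) (Function.update (fun _ : Fin (i+1) => (Set.univ : Set ℝ))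
        ⟨i, Nat.lt_succ_self i⟩ s j)
      = Function.update (fun _ : Fin (i+1) => (gaussianReal 0 1) (Set.univ : Set ℝ))
        ⟨i, Nat.lt_succ_self i⟩ ((gaussianReal 0 1) s) j :=
    fun j => Function.apply_update (fun _ t => (gaussianReal 0 1) t) _ _ _ j
  rw [Finset.prod_congr rfl fun j _ => hupd j,
    Finset.prod_update_of_mem (Finset.mem_univ _)]
  simp

lemma coord_indep (Pm : Measure (ℕ → ℝ))
    (hPm : ∀ n : ℕ, Measure.map (fun ω (i : Fin n) => ω i) Pm =
      Measure.pi fun _ : Fin n => gaussianReal 0 1) :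
    iIndepFun (fun i (ω : ℕ → ℝ) => ω i) Pm := by
  classical
  rw [iIndepFun_iff_measure_inter_preimage_eq_mul]
  intro T sets hsets
  set n := T.sup id + 1 with hn
  have hT : ∀ i ∈ T, i < n := fun i hi => Nat.lt_succ_of_le (Finset.le_sup (f := id) hi)
  have hpre : (⋂ i ∈ T, (fun ω : ℕ → ℝ => ω i) ⁻¹' sets i)
      = (fun ω (j : Fin n) => ω j) ⁻¹'
        (Set.pi Set.univ (fun j : Fin n => if (j : ℕ) ∈ T then sets j else Set.univ)) := by
    ext ω
    simp only [Set.mem_iInter, Set.mem_preimage, Set.mem_univ_pi]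
    constructor
    · intro h j
      split
      · next hj => exact h _ hj
      · trivial
    · intro h i hi
      have := h ⟨i, hT i hi⟩
      simpa [hi] using this
  have hBmeas : MeasurableSet
      (Set.pi Set.univ (fun j : Fin n => if (j : ℕ) ∈ T then sets j else Set.univ)) := by
    refine MeasurableSet.univ_pi fun j => ?_
    split
    · next hj => exact hsets _ hj
    · exact MeasurableSet.univ
  rw [hpre, ← Measure.map_apply (measurable_pi_lambda _ fun j => measurable_pi_apply _) hBmeas,
    hPm, Measure.pi_pi]
  have hcoordval : ∀ i ∈ T, Pm ((fun ω : ℕ → ℝ => ω i) ⁻¹' sets i)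
      = gaussianReal 0 1 (sets i) := by
    intro i hi
    rw [← Measure.map_apply (measurable_pi_apply i) (hsets i hi), coord_law Pm hPm]
  calc ∏ j : Fin n, gaussianReal 0 1 (if (j : ℕ) ∈ T then sets j else Set.univ)
      = ∏ j : Fin n, (if (j : ℕ) ∈ T then gaussianReal 0 1 (sets j) else 1) := by
        refine Finset.prod_congr rfl fun j _ => ?_
        split <;> simp
    _ = ∏ m ∈ Finset.range n, (if m ∈ T then gaussianReal 0 1 (sets m) else 1) := by
        rw [Fin.prod_univ_eq_prod_range (fun m => if m ∈ T then gaussianReal 0 1 (sets m) else 1)]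
    _ = ∏ m ∈ Finset.range n ∩ T, gaussianReal 0 1 (sets m) := Finset.prod_ite_mem _ _ _
    _ = ∏ m ∈ T, gaussianReal 0 1 (sets m) := by
        rw [Finset.inter_eq_right.mpr (fun i hi => Finset.mem_range.mpr (hT i hi))]
    _ = ∏ m ∈ T, Pm ((fun ω : ℕ → ℝ => ω m) ⁻¹' sets m) :=
        Finset.prod_congr rfl fun m hm => (hcoordval m hm).symm

namespace LogLRAux

noncomputable def phi (a : ℕ → ℝ) (i : ℕ) (x : ℝ) : ℝ := rexp (a i * x / 2 - (a i)^2/8)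

noncomputable def XX (a : ℕ → ℝ) (i : ℕ) (ω : ℕ → ℝ) : ℝ := phi a i (ω i)

noncomputable def MM (a : ℕ → ℝ) (n : ℕ) : (ℕ → ℝ) → ℝ := ∏ i ∈ Finset.range n, XX a i

def prj (n : ℕ) (ω : ℕ → ℝ) (j : Fin n) : ℝ := ω j

def restr1 (n : ℕ) (y : {x // x ∈ Finset.range n} → ℝ) (j : Fin n) : ℝ :=
  y ⟨(j : ℕ), Finset.mem_range.mpr j.2⟩

def restr2 (n : ℕ) (y : {x // x ∈ ({n} : Finset ℕ)} → ℝ) : ℝ :=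
  y ⟨n, Finset.mem_singleton_self n⟩

variable (a : ℕ → ℝ)

lemma measurable_phi (i : ℕ) : Measurable (phi a i) :=
  (((measurable_id.const_mul (a i)).div_const 2).sub_const _).exp

lemma phi_eq (i : ℕ) : phi a i = fun x => rexp (-(a i)^2/8) * rexp ((a i / 2) * x) := by
  funext x
  rw [phi, ← Real.exp_add]
  congr 1
  ring

lemma measurable_XX (i : ℕ) : Measurable (XX a i) :=
  (measurable_phi a i).comp (measurable_pi_apply i)

lemma XX_nonneg (i : ℕ) (ω : ℕ → ℝ) : 0 ≤ XX a i ω := (Real.exp_pos _).le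

lemma MM_apply (n : ℕ) (ω : ℕ → ℝ) : MM a n ω = ∏ i ∈ Finset.range n, XX a i ω := by
  rw [MM, Finset.prod_apply]

lemma measurable_MM (n : ℕ) : Measurable (MM a n) := by
  have : MM a n = fun ω => ∏ i ∈ Finset.range n, XX a i ω := funext (MM_apply a n)
  rw [this]
  exact Finset.measurable_prod _ fun i _ => measurable_XX a i

lemma MM_nonneg (n : ℕ) (ω : ℕ → ℝ) : 0 ≤ MM a n ω := by
  rw [MM_apply]; exact Finset.prod_nonneg fun i _ => XX_nonneg a i ω

lemma MM_succ (n : ℕ) : MM a (n+1) = MM a n * XX a n := Finset.prod_range_succ (XX a) n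

lemma measurable_prj (n : ℕ) : Measurable (prj n) :=
  measurable_pi_lambda _ fun j => measurable_pi_apply _

noncomputable def Filt : Filtration ℕ (inferInstance : MeasurableSpace (ℕ → ℝ)) where
  seq := fun n => MeasurableSpace.comap (prj n) inferInstance
  mono' := by
    intro n m hnm
    dsimp only
    have hcomp : prj n
        = (fun x : Fin m → ℝ => fun j : Fin n => x ⟨j, lt_of_lt_of_le j.2 hnm⟩) ∘ prj m := rfl
    rw [hcomp, ← MeasurableSpace.comap_comp]
    exact MeasurableSpace.comap_mono
      (Measurable.comap_le (measurable_pi_lambda _ fun j => measurable_pi_apply _))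
  le' := fun n => (measurable_prj n).comap_le

lemma measurable_G (n : ℕ) : Measurable (fun x : Fin n → ℝ => ∏ j : Fin n, phi a j (x j)) :=
  Finset.measurable_prod _ fun j _ => (measurable_phi a j).comp (measurable_pi_apply j)

lemma MM_eq_G (n : ℕ) : MM a n = (fun x : Fin n → ℝ => ∏ j : Fin n, phi a j (x j)) ∘ prj n := by
  funext ω
  rw [Function.comp_apply, MM_apply]
  exact (Fin.prod_univ_eq_prod_range (fun j => phi a j (ω j)) n).symm

lemma adapted_MM : Adapted (Filt) (MM a) := by
  intro n
  have : Measurable[Filt n] (MM a n) := by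
    rw [MM_eq_G a n]
    exact (measurable_G a n).comp (Measurable.of_comap_le le_rfl)
  exact this

section Measure

variable (Pm : Measure (ℕ → ℝ)) [IsProbabilityMeasure Pm]
  (hPm : ∀ n : ℕ, Measure.map (fun ω (i : Fin n) => ω i) Pm =
      Measure.pi fun _ : Fin n => gaussianReal 0 1)

include hPm

lemma indep_XX : iIndepFun (XX a) Pm :=
  (coord_indep Pm hPm).comp (phi a) (measurable_phi a)

lemma integrable_XX (i : ℕ) : Integrable (XX a i) Pm := by
  have h1 : Integrable (phi a i) (gaussianReal 0 1) := by
    rw [phi_eq a i]; exact (integrable_exp_mul_gaussian (a i / 2)).const_mul _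
  rw [← coord_law Pm hPm i] at h1
  exact (integrable_map_measure ((measurable_phi a i).aestronglyMeasurable)
    (measurable_pi_apply i).aemeasurable).mp h1

lemma integral_XX (i : ℕ) : ∫ ω, XX a i ω ∂Pm = 1 := by
  have h1 : ∫ ω, XX a i ω ∂Pm = ∫ x, phi a i x ∂(gaussianReal 0 1) := by
    rw [← coord_law Pm hPm i,
      integral_map (measurable_pi_apply i).aemeasurable
        ((measurable_phi a i).aestronglyMeasurable)]
    rfl
  rw [h1, phi_eq a i, integral_const_mul, integral_exp_mul_gaussian, ← Real.exp_add]
  have : -(a i)^2/8 + (a i / 2)^2/2 = 0 := by ring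
  rw [this, Real.exp_zero]

lemma indep_MM_XX (n : ℕ) : IndepFun (MM a n) (XX a n) Pm :=
  (indep_XX a Pm hPm).indepFun_finsetProd_of_notMem (measurable_XX a)
    Finset.notMem_range_self

lemma integrable_MM (n : ℕ) : Integrable (MM a n) Pm := by
  induction n with
  | zero =>
    have : MM a 0 = fun _ => (1:ℝ) := by funext ω; simp [MM_apply]
    rw [this]; exact integrable_const 1
  | succ n ih =>
    rw [MM_succ a n]
    exact (indep_MM_XX a Pm hPm n).integrable_mul ih (integrable_XX a Pm hPm n)

lemma integral_MM (n : ℕ) : ∫ ω, MM a n ω ∂Pm = 1 := by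
  induction n with
  | zero =>
    have : MM a 0 = fun _ => (1:ℝ) := by funext ω; simp [MM_apply]
    rw [this]; simp
  | succ n ih =>
    rw [MM_succ a n]
    have hmul := (indep_MM_XX a Pm hPm n).integral_mul_eq_mul_integral
      (integrable_MM a Pm hPm n).aestronglyMeasurable (integrable_XX a Pm hPm n).aestronglyMeasurable
    rw [show (∫ ω, (MM a n * XX a n) ω ∂Pm)
        = (∫ ω, MM a n ω ∂Pm) * ∫ ω, XX a n ω ∂Pm from hmul,
      ih, integral_XX a Pm hPm, mul_one]

lemma martingale_MM : Martingale (MM a) (Filt) Pm := by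
  refine martingale_of_setIntegral_eq_succ (fun n => (adapted_MM a n).stronglyMeasurable) (integrable_MM a Pm hPm) ?_
  intro n s hs
  obtain ⟨t, ht, rfl⟩ := hs
  have hsm : MeasurableSet (prj n ⁻¹' t) := measurable_prj n ht
  rw [← integral_indicator hsm, ← integral_indicator hsm]
  have hYeq : Set.indicator (prj n ⁻¹' t) (MM a n)
      = (Set.indicator t (fun x : Fin n → ℝ => ∏ j : Fin n, phi a j (x j))) ∘ prj n := by
    funext ω
    rw [MM_eq_G a n]
    exact Set.indicator_comp_right (prj n)
  have h0 := (coord_indep Pm hPm).indepFun_finset (Finset.range n) {n}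
    (Finset.disjoint_singleton_right.mpr Finset.notMem_range_self)
    (fun i => measurable_pi_apply i)
  have hPE : IndepFun (prj n) (fun ω : ℕ → ℝ => ω n) Pm := by
    have hr1 : Measurable (restr1 n) := measurable_pi_lambda _ fun j => measurable_pi_apply _
    have hr2 : Measurable (restr2 n) := measurable_pi_apply _
    exact h0.comp hr1 hr2
  have hYX : IndepFun (Set.indicator (prj n ⁻¹' t) (MM a n)) (XX a n) Pm := by
    rw [hYeq]
    exact hPE.comp ((measurable_G a n).indicator ht) (measurable_phi a n)
  have hind : Set.indicator (prj n ⁻¹' t) (MM a (n+1))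
      = Set.indicator (prj n ⁻¹' t) (MM a n) * XX a n := by
    funext ω
    by_cases hω : ω ∈ prj n ⁻¹' t
    · simp [Set.indicator_of_mem hω, MM_succ a n]
    · simp [Set.indicator_of_notMem hω]
  rw [hind]
  have hmul := hYX.integral_mul_eq_mul_integral
    ((measurable_MM a n).indicator hsm).aestronglyMeasurable (measurable_XX a n).aestronglyMeasurable
  rw [show (∫ ω, (Set.indicator (prj n ⁻¹' t) (MM a n) * XX a n) ω ∂Pm)
      = (∫ ω, Set.indicator (prj n ⁻¹' t) (MM a n) ω ∂Pm) * ∫ ω, XX a n ω ∂Pm from hmul,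
    integral_XX a Pm hPm, mul_one]

end Measure

end LogLRAux


open LogLRAux

/-- Inferential resolution under the status quo: if `∑ aₙ² = ∞` and `P₋` is the
infinite product measure `⨂ N(0,1)` on `ℕ → ℝ` (characterized by its
finite-dimensional marginals), then the log-likelihood-ratio partial sums
`Sₙ(ω) = ∑_{i<n} (aᵢωᵢ − aᵢ²/2)` tend to `−∞` `P₋`-almost surely. -/
theorem logLR_tendsto_atBot_of_resolution (a : ℕ → ℝ)
    (hdiv : ¬ Summable (fun n => (a n)^2))
    (Pm : Measure (ℕ → ℝ)) [IsProbabilityMeasure Pm]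
    (hPm : ∀ n : ℕ, Measure.map (fun ω (i : Fin n) => ω i) Pm =
      Measure.pi fun _ : Fin n => gaussianReal 0 1)
    (S : ℕ → (ℕ → ℝ) → ℝ)
    (hS : ∀ n ω, S n ω = ∑ i ∈ Finset.range n, (a i * ω i - (a i)^2 / 2)) :
    ∀ᵐ ω ∂Pm, Tendsto (fun n => S n ω) atTop atBot := by
  classical
  have hAmono : Monotone (fun m => ∑ i ∈ Finset.range m, (a i)^2) := by
    intro m k hmk
    exact Finset.sum_le_sum_of_subset_of_nonneg (Finset.range_subset_range.mpr hmk)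
      (fun i _ _ => sq_nonneg _)
  have hAtop : Tendsto (fun m => ∑ i ∈ Finset.range m, (a i)^2) atTop atTop :=
    (not_summable_iff_tendsto_nat_atTop_of_nonneg (fun n => sq_nonneg _)).mp hdiv
  have hMS : ∀ k ω, MM a k ω = rexp (S k ω / 2 + (∑ i ∈ Finset.range k, (a i)^2) / 8) := by
    intro k ω
    rw [MM_apply]
    have hXe : ∀ i ∈ Finset.range k, XX a i ω = rexp (a i * ω i / 2 - (a i)^2/8) :=
      fun i _ => rfl
    rw [Finset.prod_congr rfl hXe, ← Real.exp_sum]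
    congr 1
    rw [hS, Finset.sum_div, Finset.sum_div, ← Finset.sum_add_distrib]
    exact Finset.sum_congr rfl fun i _ => by ring
  -- maximal inequality
  have hmax : ∀ (ε : ℝ≥0) (n : ℕ),
      (ε : ℝ≥0∞) * Pm {ω | (ε:ℝ) ≤ (Finset.range (n+1)).sup' Finset.nonempty_range_add_one
        fun k => MM a k ω} ≤ 1 := by
    intro ε n
    have h := maximal_ineq (μ := Pm) (𝒢 := Filt) (f := MM a)
      ((martingale_MM a Pm hPm).submartingale) (fun n ω => MM_nonneg a n ω) (ε := ε) n
    refine h.trans ?_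
    have hle : (∫ ω in {ω | (ε:ℝ) ≤ (Finset.range (n+1)).sup' Finset.nonempty_range_add_one
          fun k => MM a k ω}, MM a n ω ∂Pm) ≤ ∫ ω, MM a n ω ∂Pm :=
      setIntegral_le_integral (integrable_MM a Pm hPm n)
        (ae_of_all _ fun ω => MM_nonneg a n ω)
    calc ENNReal.ofReal (∫ ω in _, MM a n ω ∂Pm) ≤ ENNReal.ofReal (∫ ω, MM a n ω ∂Pm) :=
          ENNReal.ofReal_le_ofReal hle
      _ = 1 := by rw [integral_MM a Pm hPm n, ENNReal.ofReal_one]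
  -- tail bound
  have hTbound : ∀ (C : ℕ) (m : ℕ), Pm {ω | ∃ k, m ≤ k ∧ -(C:ℝ) ≤ S k ω}
      ≤ ENNReal.ofReal (rexp ((C:ℝ)/2 - (∑ i ∈ Finset.range m, (a i)^2)/8)) := by
    intro C m
    have hεrpos : (0:ℝ) < rexp ((∑ i ∈ Finset.range m, (a i)^2)/8 - (C:ℝ)/2) :=
      Real.exp_pos _
    have hUnion : {ω : ℕ → ℝ | ∃ k, m ≤ k ∧ -(C:ℝ) ≤ S k ω}
        = ⋃ n, {ω : ℕ → ℝ | ∃ k, m ≤ k ∧ k ≤ n ∧ -(C:ℝ) ≤ S k ω} := by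
      ext ω
      simp only [Set.mem_setOf_eq, Set.mem_iUnion]
      constructor
      · rintro ⟨k, hk1, hk2⟩; exact ⟨k, k, hk1, le_refl k, hk2⟩
      · rintro ⟨n, k, hk1, _, hk2⟩; exact ⟨k, hk1, hk2⟩
    have hTsub : ∀ n : ℕ, {ω : ℕ → ℝ | ∃ k, m ≤ k ∧ k ≤ n ∧ -(C:ℝ) ≤ S k ω}
        ⊆ {ω | (((rexp ((∑ i ∈ Finset.range m, (a i)^2)/8 - (C:ℝ)/2)).toNNReal : ℝ))
            ≤ (Finset.range (n+1)).sup' Finset.nonempty_range_add_one fun k => MM a k ω} := by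
      intro n ω hω
      obtain ⟨k, hmk, hkn, hSk⟩ := hω
      have hk_mem : k ∈ Finset.range (n+1) := Finset.mem_range.mpr (Nat.lt_succ_of_le hkn)
      have h1 : rexp ((∑ i ∈ Finset.range m, (a i)^2)/8 - (C:ℝ)/2) ≤ MM a k ω := by
        rw [hMS k ω]
        apply Real.exp_le_exp.mpr
        have h2 : (∑ i ∈ Finset.range m, (a i)^2) ≤ ∑ i ∈ Finset.range k, (a i)^2 :=
          hAmono hmk
        linarith
      have : (((rexp ((∑ i ∈ Finset.range m, (a i)^2)/8 - (C:ℝ)/2)).toNNReal : ℝ))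
          = rexp ((∑ i ∈ Finset.range m, (a i)^2)/8 - (C:ℝ)/2) :=
        Real.coe_toNNReal _ hεrpos.le
      rw [Set.mem_setOf_eq, this]
      exact h1.trans (Finset.le_sup' (fun k => MM a k ω) hk_mem)
    have hbound : ∀ n : ℕ, Pm {ω : ℕ → ℝ | ∃ k, m ≤ k ∧ k ≤ n ∧ -(C:ℝ) ≤ S k ω}
        ≤ ENNReal.ofReal (rexp ((C:ℝ)/2 - (∑ i ∈ Finset.range m, (a i)^2)/8)) := by
      intro n
      have h1 := hmax (rexp ((∑ i ∈ Finset.range m, (a i)^2)/8 - (C:ℝ)/2)).toNNReal n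
      have h2 := measure_mono (μ := Pm) (hTsub n)
      have h3 : Pm {ω | (((rexp ((∑ i ∈ Finset.range m, (a i)^2)/8 - (C:ℝ)/2)).toNNReal : ℝ))
            ≤ (Finset.range (n+1)).sup' Finset.nonempty_range_add_one fun k => MM a k ω}
          ≤ (((rexp ((∑ i ∈ Finset.range m, (a i)^2)/8 - (C:ℝ)/2)).toNNReal : ℝ≥0∞))⁻¹ := by
        rw [ENNReal.le_inv_iff_mul_le, mul_comm]
        exact h1
      have h4 : (((rexp ((∑ i ∈ Finset.range m, (a i)^2)/8 - (C:ℝ)/2)).toNNReal : ℝ≥0∞))⁻¹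
          = ENNReal.ofReal (rexp ((C:ℝ)/2 - (∑ i ∈ Finset.range m, (a i)^2)/8)) := by
        have hco : (((rexp ((∑ i ∈ Finset.range m, (a i)^2)/8 - (C:ℝ)/2)).toNNReal : ℝ≥0∞))
            = ENNReal.ofReal (rexp ((∑ i ∈ Finset.range m, (a i)^2)/8 - (C:ℝ)/2)) := rfl
        rw [hco, ← ENNReal.ofReal_inv_of_pos hεrpos, ← Real.exp_neg, neg_sub]
      exact h2.trans (h3.trans_eq h4)
    rw [hUnion]
    have hmono : Monotone (fun n => {ω : ℕ → ℝ | ∃ k, m ≤ k ∧ k ≤ n ∧ -(C:ℝ) ≤ S k ω}) :=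
      fun n n' hnn' ω hω => by
        obtain ⟨k, h1, h2, h3⟩ := hω; exact ⟨k, h1, h2.trans hnn', h3⟩
    rw [(hmono.directed_le).measure_iUnion]
    exact iSup_le hbound
  -- the bad sets are null
  have hbad : ∀ C : ℕ, Pm (⋂ m, {ω : ℕ → ℝ | ∃ k, m ≤ k ∧ -(C:ℝ) ≤ S k ω}) = 0 := by
    intro C
    refine le_antisymm ?_ zero_le
    have hle : ∀ m : ℕ, Pm (⋂ m', {ω : ℕ → ℝ | ∃ k, m' ≤ k ∧ -(C:ℝ) ≤ S k ω})
        ≤ ENNReal.ofReal (rexp ((C:ℝ)/2 - (∑ i ∈ Finset.range m, (a i)^2)/8)) :=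
      fun m => le_trans (measure_mono (Set.iInter_subset _ m)) (hTbound C m)
    have h8 : Tendsto (fun m => (∑ i ∈ Finset.range m, (a i)^2)/8) atTop atTop :=
      hAtop.atTop_div_const (by norm_num)
    have hexp : Tendsto
        (fun m => ENNReal.ofReal (rexp ((C:ℝ)/2 - (∑ i ∈ Finset.range m, (a i)^2)/8)))
        atTop (nhds 0) := by
      rw [← ENNReal.ofReal_zero]
      refine (ENNReal.continuous_ofReal.tendsto 0).comp ?_
      refine Real.tendsto_exp_atBot.comp ?_
      simp only [sub_eq_add_neg]
      exact tendsto_atBot_add_const_left _ _ (tendsto_neg_atTop_atBot.comp h8)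
    exact le_of_tendsto_of_tendsto' tendsto_const_nhds hexp hle
  have hae : ∀ᵐ ω ∂Pm, ∀ C : ℕ,
      ω ∉ ⋂ m, {ω' : ℕ → ℝ | ∃ k, m ≤ k ∧ -(C:ℝ) ≤ S k ω'} := by
    rw [ae_all_iff]
    intro C
    exact (measure_eq_zero_iff_ae_notMem).mp (hbad C)
  filter_upwards [hae] with ω hω
  rw [tendsto_atBot]
  intro b
  have h1 := hω ⌈-b⌉₊
  simp only [Set.mem_iInter, Set.mem_setOf_eq, not_forall, not_exists, not_and, not_le] at h1
  obtain ⟨m, hm⟩ := h1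
  rw [eventually_atTop]
  refine ⟨m, fun k hk => ?_⟩
  have h2 := hm k hk
  have h3 : -b ≤ (⌈-b⌉₊ : ℝ) := Nat.le_ceil _
  linarith
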